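/- Corollary: Let r = 2^m with m ≥ 1 and s = 2^n with gcd(m,n) = 1. Then there exist c ∈ F_{r^2} and d ∈ F_{r^2} \ F_r such that F(x) = x(x^s + x^r + c x^{rs}) + x^s(c^r x^r + d x^{rs}) + x^{(s+1)r} is almost perfect nonlinear on F_{r^2}: for every nonzero a and every b in F_{r^2}, the equation F(x+a) + F(x) = b has at most 2 solutions. -/

import Mathlib

open Finset Polynomial
open scoped Classical
set_option linter.unusedSectionVars false


section Identities
variable {R : Type} [CommRing R]

private lemma key1 (h2 : (2:R) = 0) (c cq d x xq xs xqs y yq ys yqs b bq bs bqs : R) :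
    ((x+b)*((xs+bs) + (xq+bq) + c*(xqs+bqs)) + (xs+bs)*(cq*(xq+bq) + d*(xqs+bqs)) + (xqs+bqs)*(xq+bq))
    + (x*(xs + xq + c*xqs) + xs*(cq*xq + d*xqs) + xqs*xq)
    + (((y+b)*((ys+bs) + (yq+bq) + c*(yqs+bqs)) + (ys+bs)*(cq*(yq+bq) + d*(yqs+bqs)) + (yqs+bqs)*(yq+bq))
    + (y*(ys + yq + c*yqs) + ys*(cq*yq + d*yqs) + yqs*yq))
    = (x+y)*bs + b*(xs+ys) + (xq+yq)*bqs + bq*(xqs+yqs) + (x+y)*bq + b*(xq+yq)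
      + c*((x+y)*bqs + b*(xqs+yqs)) + cq*((xs+ys)*bq + bs*(xq+yq)) + d*((xs+ys)*bqs + bs*(xqs+yqs)) := by
  linear_combination (
b*bq + b*bqs*c + b*bs + bq*bqs + bq*bs*cq + bqs*bs*d + c*x*xqs + c*y*yqs + cq*xq*xs + cq*yq*ys + d*xqs*xs + d*yqs*ys + x*xq + x*xs + xq*xqs + y*yq + y*ys + yq*yqs) * h2

private lemma key2 (h2 : (2:R) = 0) (c cq d dq x xq xs xqs b bq bs bqs : R) :
    (x*bs + b*xs + xq*bqs + bq*xqs + x*bq + b*xq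
      + c*(x*bqs + b*xqs) + cq*(xs*bq + bs*xq) + d*(xs*bqs + bs*xqs))
    + (xq*bqs + bq*xqs + x*bs + b*xs + xq*b + bq*x
      + cq*(xq*bs + bq*xs) + c*(xqs*b + bqs*x) + dq*(xqs*bs + bqs*xs))
    = (d+dq)*(xs*bqs + bs*xqs) := by
  linear_combination (
b*c*xqs + b*xq + b*xs + bq*cq*xs + bq*x + bq*xqs + bqs*c*x + bqs*xq + bs*cq*xq + bs*x) * h2

private lemma key3 (h2 : (2:R) = 0) (c cq d b bq bs bqs l ls : R) :
    ((b*l)*bs + b*(bs*ls) + (bq*l)*bqs + bq*(bqs*ls) + (b*l)*bq + b*(bq*l)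
      + c*((b*l)*bqs + b*(bqs*ls)) + cq*((bs*ls)*bq + bs*(bq*l)) + d*((bs*ls)*bqs + bs*(bqs*ls)))
    = (b*bs + c*b*bqs + cq*bq*bs + bq*bqs)*(ls+l) := by
  linear_combination (
b*bq*l + bqs*bs*d*ls) * h2

private lemma key4 (h2 : (2:R) = 0) (e es dl dls v vs g : R) :
    (es+dls)*(e+dl) + (g*v+1+g*dl)*(es+dls)*(e+dl+1) + (g*v+1+g*dl+g)*(e+dl)*(es+dls+1)
      + (es+dls+1)*(e+dl+1)
    = g*((es+vs)*(e+v)) + g*(vs+v+1+dls+dl)*(e+v) + g*(v*v+v+dl*dl+dl) + 1 := by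
  linear_combination (
dl + (2)*dl*dls + dl*dls*e*g + dl*dls*g + dl*dls*g*v + dl*e*es*g + (2)*dl*es + dl*es*g + dl*es*g*v + dl^2*dls*g + dl^2*es*g + dls + (2)*dls*e + dls*e*g*v + e + (2)*e*es + e*es*g*v + (-1)*e*g*vs + es + (-1)*g*v + (-1)*g*v*vs + (-1)*g*v^2) * h2

end Identities

section Infra
variable {K : Type} [Field K] [Fintype K]

private lemma char2_of_card {m : ℕ} (hcard : Fintype.card K = 2 ^ (2*m)) : CharP K 2 := by
  have h := ringChar.charP K
  have hp : (ringChar K).Prime := CharP.char_is_prime K (ringChar K)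
  obtain ⟨n, -, hKn⟩ := FiniteField.card K (ringChar K)
  have hdvd : ringChar K ∣ 2 ^ (2*m) := by
    rw [← hcard, hKn]
    exact dvd_pow_self _ (by exact_mod_cast n.ne_zero)
  have h2 : ringChar K = 2 :=
    (Nat.prime_dvd_prime_iff_eq hp Nat.prime_two).mp (hp.dvd_of_dvd_pow hdvd)
  rwa [h2] at h

private lemma pow_qq {m : ℕ} (hcard : Fintype.card K = 2^(2*m)) (u : K) :
    (u ^ (2^m)) ^ (2^m) = u := by
  have h : (2^m)*(2^m) = Fintype.card K := by rw [hcard, ← pow_add, two_mul]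
  rw [← pow_mul, h, FiniteField.pow_card]

private lemma pow2_inj [CharP K 2] {k : ℕ} {u w : K} (h : u^(2^k) = w^(2^k)) : u = w := by
  have h0 : (u + w)^(2^k) = 0 := by
    rw [add_pow_char_pow, h, CharTwo.add_self_eq_zero]
  have huw : u + w = 0 := pow_eq_zero_iff (a := u + w) (n := 2^k) (by positivity) |>.mp h0
  rw [add_eq_zero_iff_eq_neg] at huw
  simpa [CharTwo.neg_eq] using huw

private lemma gcd_fix [CharP K 2] (lam : K) : ∀ α β : ℕ, lam^(2^α) = lam → lam^(2^β) = lam →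
    lam^(2^(Nat.gcd α β)) = lam := by
  intro α β
  induction α, β using Nat.gcd.induction with
  | H0 n => intro _ h; simpa using h
  | H1 a b hab ih =>
    intro ha hb
    rw [Nat.gcd_rec]
    have iter : ∀ k, lam^(2^(a*k)) = lam := by
      intro k; induction k with
      | zero => simp
      | succ k ihk =>
        have h1 : 2^(a*(k+1)) = 2^(a*k) * 2^a := by rw [← pow_add]; ring_nf
        rw [h1, pow_mul, ihk, ha]
    apply ih _ ha
    have key : (lam^(2^(b % a)))^(2^(a*(b/a))) = lam^(2^(a*(b/a))) := by
      rw [← pow_mul, ← pow_add, Nat.mod_add_div, hb, iter]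
    exact pow2_inj key

private lemma count_pow_self_le (N : ℕ) (hN : 1 < N) :
    (univ.filter fun x : K => x ^ N = x).card ≤ N := by
  classical
  have hdeg : (X ^ N - X : K[X]).natDegree = N :=
    FiniteField.X_pow_card_sub_X_natDegree_eq K hN
  have hne : (X ^ N - X : K[X]) ≠ 0 := by
    intro h; rw [h] at hdeg; simp at hdeg; omega
  have hsub : (univ.filter fun x : K => x ^ N = x).val ⊆ (X ^ N - X : K[X]).roots := by
    intro r hr
    rw [Finset.mem_val, mem_filter] at hr
    rw [Polynomial.mem_roots hne]
    simp [Polynomial.IsRoot, sub_eq_zero, hr.2]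
  have := Polynomial.card_le_degree_of_subset_roots hsub
  rwa [hdeg] at this

private lemma count_pow_one_le (N : ℕ) (hN : N ≠ 0) :
    (univ.filter fun x : K => x ^ N = 1).card ≤ N := by
  classical
  have hdeg : (X ^ N - C 1 : K[X]).natDegree = N := by
    rw [Polynomial.natDegree_X_pow_sub_C]
  have hne : (X ^ N - C 1 : K[X]) ≠ 0 := by
    intro h; rw [h] at hdeg; simp at hdeg; omega
  have hsub : (univ.filter fun x : K => x ^ N = 1).val ⊆ (X ^ N - C 1 : K[X]).roots := by
    intro r hr
    rw [Finset.mem_val, mem_filter] at hr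
    rw [Polynomial.mem_roots hne]
    simp [Polynomial.IsRoot, sub_eq_zero, hr.2]
  have := Polynomial.card_le_degree_of_subset_roots hsub
  rwa [hdeg] at this

private lemma fiber_count (f : K → K) (hf : ∀ u w : K, f (u+w) = f u + f w) :
    (univ.filter fun u : K => f u = 0).card * (univ.image f).card = Fintype.card K := by
  classical
  have h0 : f 0 = 0 := by
    have h := hf 0 0
    rw [add_zero] at h
    exact (left_eq_add.mp h)
  have hneg : ∀ x, f (-x) = - f x := by
    intro x
    have h := hf x (-x)
    rw [add_neg_cancel, h0] at h
    exact eq_neg_of_add_eq_zero_right h.symm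
  have hcard := Finset.card_eq_sum_card_fiberwise
    (s := (univ : Finset K)) (t := univ.image f) (f := f)
    (fun x _ => mem_image_of_mem f (mem_univ x))
  have hfib : ∀ w ∈ univ.image f,
      (univ.filter fun u => f u = w).card = (univ.filter fun u => f u = 0).card := by
    intro w hw
    obtain ⟨xw, -, hxw⟩ := mem_image.mp hw
    apply Finset.card_bij (fun u _ => u - xw)
    · intro u hu
      rw [mem_filter] at hu ⊢
      refine ⟨mem_univ _, ?_⟩
      simp [sub_eq_add_neg, hf, hneg, hxw, hu.2]
    · intro u₁ h₁ u₂ h₂ h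
      exact sub_left_injective h
    · intro v hv
      rw [mem_filter] at hv
      refine ⟨v + xw, ?_, by ring⟩
      rw [mem_filter]
      exact ⟨mem_univ _, by rw [hf, hv.2, hxw, zero_add]⟩
  rw [Finset.sum_congr rfl hfib, Finset.sum_const, smul_eq_mul, Finset.card_univ] at hcard
  rw [mul_comm]
  omega

end Infra

section Infra2
variable {K : Type} [Field K] [Fintype K]

private lemma Fq_struct (m : ℕ) (hm : 1 ≤ m) [CharP K 2] (hcard : Fintype.card K = 2^(2*m)) :
    (univ.filter fun u : K => u^(2^m) = u).card = 2^m ∧ ∃ δ : K, δ^(2^m) = δ + 1 := by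
  have h2 : (2:K) = 0 := CharTwo.two_eq_zero
  set f : K → K := fun u => u^(2^m) + u with hfdef
  have hf : ∀ u w : K, f (u+w) = f u + f w := by
    intro u w
    simp only [hfdef]
    rw [add_pow_char_pow]
    ring
  have hker : (univ.filter fun u : K => f u = 0) = (univ.filter fun u : K => u^(2^m) = u) := by
    ext u
    simp only [mem_filter, mem_univ, true_and, hfdef]
    constructor
    · intro h; linear_combination h - u*h2
    · intro h; linear_combination h + u*h2
  have himsub : univ.image f ⊆ (univ.filter fun u : K => u^(2^m) = u) := by
    intro w hw
    obtain ⟨x, -, hx⟩ := mem_image.mp hw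
    rw [mem_filter]
    refine ⟨mem_univ _, ?_⟩
    rw [← hx]
    show (x^(2^m) + x)^(2^m) = x^(2^m) + x
    rw [add_pow_char_pow, pow_qq hcard x]
    ring
  have hmul := fiber_count f hf
  rw [hker] at hmul
  have hkle : (univ.filter fun u : K => u^(2^m) = u).card ≤ 2^m :=
    count_pow_self_le (2^m) (Nat.one_lt_two_pow_iff.mpr (by omega))
  have hile : (univ.image f).card ≤ (univ.filter fun u : K => u^(2^m) = u).card :=
    Finset.card_le_card himsub
  have hcardK : (univ.filter fun u : K => u^(2^m) = u).card * (univ.image f).card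
      = 2^m * 2^m := by
    rw [hmul, hcard, ← pow_add, two_mul]
  have hkge : 2^m ≤ (univ.filter fun u : K => u^(2^m) = u).card := by
    nlinarith [hcardK, hkle, hile]
  have hkeq : (univ.filter fun u : K => u^(2^m) = u).card = 2^m := le_antisymm hkle hkge
  have hieq : (univ.image f).card = 2^m := by
    have h2m : 0 < 2^m := by positivity
    rw [hkeq] at hcardK
    exact Nat.eq_of_mul_eq_mul_left h2m hcardK
  refine ⟨hkeq, ?_⟩
  have himeq : univ.image f = (univ.filter fun u : K => u^(2^m) = u) :=
    Finset.eq_of_subset_of_card_le himsub (by rw [hieq, hkeq])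
  have h1mem : (1:K) ∈ univ.image f := by
    rw [himeq, mem_filter]
    exact ⟨mem_univ _, one_pow _⟩
  obtain ⟨δ, -, hδ⟩ := mem_image.mp h1mem
  refine ⟨δ, ?_⟩
  have hδ' : δ^(2^m) + δ = 1 := hδ
  linear_combination hδ' - δ*h2

private lemma image_card_bound {α β : Type} [DecidableEq α] [DecidableEq β] (s : Finset α) (f : α → β)
    {z₁ w₁ z₂ w₂ : α} (hz1 : z₁ ∈ s) (hw1 : w₁ ∈ s) (hz2 : z₂ ∈ s) (hw2 : w₂ ∈ s)
    (hf1 : f z₁ = f w₁) (hne1 : z₁ ≠ w₁) (hf2 : f z₂ = f w₂) (hne2 : z₂ ≠ w₂)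
    (hpair : ({z₁, w₁} : Finset α) ≠ {z₂, w₂}) :
    (s.image f).card + 2 ≤ s.card := by
  obtain ⟨u₂, v₂, hu2s, hv2s, hfu2v2, hu2v2, hu2w1, hpairs⟩ :
      ∃ u₂ v₂, u₂ ∈ s ∧ v₂ ∈ s ∧ f u₂ = f v₂ ∧ u₂ ≠ v₂ ∧ u₂ ≠ w₁ ∧
        ({u₂, v₂} : Finset α) = {z₂, w₂} := by
    rcases eq_or_ne z₂ w₁ with h | h
    · exact ⟨w₂, z₂, hw2, hz2, hf2.symm, hne2.symm,
        fun hc => hne2 (h.trans hc.symm), Finset.pair_comm _ _⟩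
    · exact ⟨z₂, w₂, hz2, hw2, hf2, hne2, h, rfl⟩
  have hsubset : s.image f ⊆ ((s.erase w₁).erase u₂).image f := by
    intro t ht
    obtain ⟨x, hx, hfx⟩ := mem_image.mp ht
    by_cases hxw1 : x = w₁
    · by_cases hz1u2 : z₁ = u₂
      · have hv2w1 : v₂ ≠ w₁ := by
          intro h
          apply hpair
          rw [← hpairs, ← hz1u2, ← h]
        refine mem_image.mpr ⟨v₂, ?_, ?_⟩
        · rw [mem_erase, mem_erase]
          exact ⟨fun hc => hu2v2 hc.symm, hv2w1, hv2s⟩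
        · rw [← hfu2v2, ← hz1u2, hf1, ← hxw1, hfx]
      · refine mem_image.mpr ⟨z₁, ?_, ?_⟩
        · rw [mem_erase, mem_erase]
          exact ⟨hz1u2, hne1, hz1⟩
        · rw [hf1, ← hxw1, hfx]
    · by_cases hxu2 : x = u₂
      · by_cases hv2w1 : v₂ = w₁
        · have hz1u2 : z₁ ≠ u₂ := by
            intro h
            apply hpair
            rw [← hpairs, ← h, ← hv2w1]
          refine mem_image.mpr ⟨z₁, ?_, ?_⟩
          · rw [mem_erase, mem_erase]
            exact ⟨hz1u2, hne1, hz1⟩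
          · rw [hf1, ← hv2w1, ← hfu2v2, ← hxu2, hfx]
        · refine mem_image.mpr ⟨v₂, ?_, ?_⟩
          · rw [mem_erase, mem_erase]
            exact ⟨fun hc => hu2v2 hc.symm, hv2w1, hv2s⟩
          · rw [← hfu2v2, ← hxu2, hfx]
      · refine mem_image.mpr ⟨x, ?_, ?_⟩
        · rw [mem_erase, mem_erase]
          exact ⟨hxu2, hxw1, hx⟩
        · exact hfx
  have h1 : u₂ ∈ s.erase w₁ := mem_erase.mpr ⟨hu2w1, hu2s⟩
  have hcard2 : ((s.erase w₁).erase u₂).card = s.card - 1 - 1 := by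
    rw [Finset.card_erase_of_mem h1, Finset.card_erase_of_mem hw1]
  have hle := (Finset.card_le_card hsubset).trans Finset.card_image_le
  have hs2 : 1 < s.card := Finset.one_lt_card.mpr ⟨z₁, hz1, w₁, hw1, hne1⟩
  omega

end Infra2
section GoodC
variable {K : Type} [Field K] [Fintype K]

private lemma exists_good_c (m n : ℕ) (hm : 2 ≤ m) (hn : 1 ≤ n)
    (hgcd : Nat.gcd m n = 1) [CharP K 2] (hcard : Fintype.card K = 2 ^ (2*m)) :
    ∃ c : K, ∀ t : K, t ^ (2^m + 1) = 1 →
      t^(2^n + 1) + c * t^(2^n) + c^(2^m) * t + 1 ≠ 0 := by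
  classical
  have h2 : (2:K) = 0 := CharTwo.two_eq_zero
  obtain ⟨hFqcard, δ, hδq⟩ := Fq_struct m (by omega) hcard
  have haddFq : ∀ u w : K, u^(2^m) = u → w^(2^m) = w → (u+w)^(2^m) = u+w := by
    intro u w hu hw; rw [add_pow_char_pow, hu, hw]
  have hmulFq : ∀ u w : K, u^(2^m) = u → w^(2^m) = w → (u*w)^(2^m) = u*w := by
    intro u w hu hw; rw [mul_pow, hu, hw]
  have hinvFq : ∀ u : K, u^(2^m) = u → (u⁻¹)^(2^m) = u⁻¹ := by
    intro u hu; rw [inv_pow, hu]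
  have hsFq : ∀ u : K, u^(2^m) = u → (u^(2^n))^(2^m) = u^(2^n) := by
    intro u hu; rw [pow_right_comm, hu]
  have honeFq : (1:K)^(2^m) = 1 := one_pow _
  have hεq : (δ^(2^n) + δ)^(2^m) = δ^(2^n) + δ := by
    rw [add_pow_char_pow, pow_right_comm, hδq, add_pow_char_pow, one_pow]
    linear_combination h2
  have hνq : (δ*δ + δ)^(2^m) = δ*δ + δ := by
    rw [add_pow_char_pow, mul_pow, hδq]
    linear_combination (δ+1)*h2
  -- choice of v
  obtain ⟨v, hvFq, hA0⟩ : ∃ v : K, v^(2^m) = v ∧ v^(2^n) + v + 1 + (δ^(2^n) + δ) ≠ 0 := by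
    by_cases h1ε : (1:K) + (δ^(2^n) + δ) ≠ 0
    · refine ⟨0, by simp, ?_⟩
      rw [zero_pow (by positivity), add_zero, zero_add]
      exact h1ε
    · push_neg at h1ε
      by_contra hcon
      push_neg at hcon
      have hall : ∀ u : K, u^(2^m) = u → u^(2^n) = u := by
        intro u hu
        have h := hcon u hu
        linear_combination h - h1ε - u*h2
      have hsq : ∀ u : K, u^(2^m) = u → u^2 = u := by
        intro u hu
        have := gcd_fix u m n hu (hall u hu)
        rw [hgcd, pow_one] at this
        exact this
      have hsub2 : (univ.filter fun u : K => u^(2^m) = u) ⊆ univ.filter fun x : K => x^2 = x := by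
        intro u hu
        rw [mem_filter] at hu ⊢
        exact ⟨mem_univ _, hsq u hu.2⟩
      have hle := Finset.card_le_card hsub2
      rw [hFqcard] at hle
      have h22 := count_pow_self_le (K := K) 2 (by norm_num)
      have h4m : 4 ≤ 2^m := by
        calc 4 = 2^2 := rfl
        _ ≤ 2^m := Nat.pow_le_pow_right (by norm_num) hm
      omega
  have hAq : (v^(2^n) + v + 1 + (δ^(2^n) + δ))^(2^m) = v^(2^n) + v + 1 + (δ^(2^n) + δ) :=
    haddFq _ _ (haddFq _ _ (haddFq _ _ (hsFq v hvFq) hvFq) honeFq) hεq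
  set A := v^(2^n) + v + 1 + (δ^(2^n) + δ) with hA
  -- choice of B
  obtain ⟨B, hBFq, hBroot, hBB0⟩ : ∃ B : K, B^(2^m) = B ∧
      (∀ w : K, w^(2^m) = w → w^(2^n)*w + A*w ≠ B) ∧ B ≠ v*v + v + (δ*δ + δ) := by
    rcases Nat.lt_or_ge m 3 with h3 | h3
    · -- m = 2, q = 4 : B = 1
      have hm2 : m = 2 := by omega
      subst hm2
      refine ⟨1, one_pow _, ?_, ?_⟩
      · intro w hw hroot
        have hw0 : w ≠ 0 := by
          rintro rfl
          simp at hroot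
        have hw3 : w^3 = 1 := by
          have h4 : w^3 * w = 1 * w := by
            rw [one_mul]
            calc w^3*w = w^(2^2) := by ring
              _ = w := hw
          exact mul_right_cancel₀ hw0 h4
        have hodd : Odd n := Nat.coprime_two_left.mp hgcd
        have h3dvd : (3:ℕ) ∣ 2^n + 1 := by
          have : ((2^n + 1 : ℕ) : ZMod 3) = 0 := by
            push_cast
            rw [show ((2:ZMod 3)) = -1 by decide]
            rw [hodd.neg_one_pow]
            ring
          exact (ZMod.natCast_eq_zero_iff _ 3).mp this
        obtain ⟨k, hk⟩ := h3dvd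
        have hws1 : w^(2^n) * w = 1 := by
          have : w^(2^n+1) = 1 := by rw [hk, pow_mul, hw3, one_pow]
          rw [← pow_succ]
          exact this
        have hAw : A * w = 0 := by linear_combination hroot - hws1
        rcases mul_eq_zero.mp hAw with h | h
        · exact hA0 h
        · exact hw0 h
      · intro heq
        have hδ4 : δ*δ*(δ*δ) = δ + 1 := by
          have h4 : δ^(2^2) = δ + 1 := hδq
          calc δ*δ*(δ*δ) = δ^(2^2) := by ring
            _ = δ + 1 := h4
        have hv4 : v*v*(v*v) = v := by
          have h4 : v^(2^2) = v := hvFq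
          calc v*v*(v*v) = v^(2^2) := by ring
            _ = v := h4
        have hν2 : (δ*δ+δ)*(δ*δ+δ) = (δ*δ+δ) + 1 := by
          linear_combination hδ4 + (δ*δ*δ)*h2
        have hτ2 : (v*v+v)*(v*v+v) = v*v + v := by
          linear_combination hv4 + (v*v*v)*h2
        have : (1:K) = 0 := by
          linear_combination hτ2 - hν2 - ((v*v+v) - (δ*δ+δ))*heq + (v - 2*v^3 - v^4 - δ + 2*δ^3 + δ^4)*h2
        exact one_ne_zero this
    · -- m ≥ 3 : q ≥ 8, two collision pairs
      have hq8 : 8 ≤ 2^m := by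
        calc 8 = 2^3 := rfl
        _ ≤ 2^m := Nat.pow_le_pow_right (by norm_num) h3
      have hcube : ∀ lam : K, lam^(2^m) = lam → lam^(2^n)*lam = 1 → lam^3 = 1 := by
        intro lam hq hs1
        have hlam0 : lam ≠ 0 := by
          rintro rfl
          rw [mul_zero] at hs1
          exact zero_ne_one hs1
        have hinv : lam^(2^n) = lam⁻¹ := eq_inv_of_mul_eq_one_left hs1
        have h2n : lam^(2^(2*n)) = lam := by
          have he : (2:ℕ)^(2*n) = 2^n * 2^n := by rw [two_mul, pow_add]
          rw [he, pow_mul, hinv, inv_pow, hinv, inv_inv]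
        have hg := gcd_fix lam m (2*n) hq h2n
        have hdvd : Nat.gcd m (2*n) ∣ 2 := by
          have h1 : Nat.gcd m (2*n) ∣ Nat.gcd (2*m) (2*n) :=
            Nat.dvd_gcd ((Nat.gcd_dvd_left m (2*n)).mul_left 2) (Nat.gcd_dvd_right _ _)
          rwa [Nat.gcd_mul_left, hgcd, mul_one] at h1
        have h4 : lam^(2^2) = lam := by
          rcases (Nat.dvd_prime Nat.prime_two).mp hdvd with h | h
          · rw [h, pow_one] at hg
            calc lam^(2^2) = (lam^2)^2 := by ring
              _ = lam := by rw [hg, hg]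
          · rw [h] at hg; exact hg
        have h43 : lam^3 * lam = 1 * lam := by
          rw [one_mul]
          calc lam^3*lam = lam^(2^2) := by ring
            _ = lam := h4
        exact mul_right_cancel₀ hlam0 h43
      set bad : Finset K := insert (0:K) (insert 1 (univ.filter fun x : K => x^3 = 1)) with hbad
      have hbadcard : bad.card ≤ 5 := by
        calc bad.card ≤ (insert 1 (univ.filter fun x : K => x^3 = 1)).card + 1 :=
              Finset.card_insert_le _ _
        _ ≤ (univ.filter fun x : K => x^3 = 1).card + 1 + 1 := by
              have := Finset.card_insert_le (1:K) (univ.filter fun x : K => x^3 = 1)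
              omega
        _ ≤ 3 + 1 + 1 := by
              have := count_pow_one_le (K := K) 3 (by norm_num)
              omega
      have hpick : ∀ bd : Finset K, bd.card < 2^m → ∃ lam : K, lam^(2^m) = lam ∧ lam ∉ bd := by
        intro bd hbd
        have hpos : 0 < ((univ.filter fun u : K => u^(2^m) = u) \ bd).card := by
          have := Finset.le_card_sdiff bd (univ.filter fun u : K => u^(2^m) = u)
          rw [hFqcard] at this
          omega
        obtain ⟨lam, hlam⟩ := Finset.card_pos.mp hpos
        rw [Finset.mem_sdiff, mem_filter] at hlam
        exact ⟨lam, hlam.1.2, hlam.2⟩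
      obtain ⟨l₁, hl₁Fq, hl₁bad⟩ := hpick bad (by omega)
      obtain ⟨l₂, hl₂Fq, hl₂bad⟩ := hpick (insert l₁ (insert l₁⁻¹ bad))
        (by
          have h1 := Finset.card_insert_le l₁ (insert l₁⁻¹ bad)
          have h2' := Finset.card_insert_le l₁⁻¹ bad
          omega)
      have hlprop : ∀ lam : K, lam^(2^m) = lam → lam ∉ bad →
          lam ≠ 0 ∧ lam ≠ 1 ∧ 1 + lam^(2^n)*lam ≠ 0 := by
        intro lam hq hbd
        refine ⟨?_, ?_, ?_⟩
        · intro h; exact hbd (by rw [hbad, h]; exact Finset.mem_insert_self _ _)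
        · intro h
          exact hbd (by rw [hbad, h]; exact Finset.mem_insert_of_mem (Finset.mem_insert_self _ _))
        · intro h
          have hs1 : lam^(2^n)*lam = 1 := by linear_combination -h + h2 + (lam*lam^(2^n) - 1)*h2
          have := hcube lam hq hs1
          apply hbd
          rw [hbad]
          exact Finset.mem_insert_of_mem (Finset.mem_insert_of_mem (by
            rw [mem_filter]; exact ⟨mem_univ _, this⟩))
      obtain ⟨hl₁0, hl₁1, hl₁s⟩ := hlprop l₁ hl₁Fq hl₁bad
      have hl₂bad' : l₂ ∉ bad := fun h =>
        hl₂bad (Finset.mem_insert_of_mem (Finset.mem_insert_of_mem h))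
      obtain ⟨hl₂0, hl₂1, hl₂s⟩ := hlprop l₂ hl₂Fq hl₂bad'
      have hl₂l₁ : l₂ ≠ l₁ := fun h => hl₂bad (by rw [h]; exact Finset.mem_insert_self _ _)
      have hl₂l₁inv : l₂ ≠ l₁⁻¹ := fun h =>
        hl₂bad (by rw [h]; exact Finset.mem_insert_of_mem (Finset.mem_insert_self _ _))
      -- surjectivity of s-power map on Fq
      have hsurj : ∀ wt : K, wt^(2^m) = wt → ∃ z : K, z^(2^m) = z ∧ z^(2^n) = wt := by
        have himg : (univ.filter fun u : K => u^(2^m) = u).image (fun z : K => z^(2^n))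
            = (univ.filter fun u : K => u^(2^m) = u) := by
          apply Finset.eq_of_subset_of_card_le
          · intro w hw
            obtain ⟨z, hz, rfl⟩ := mem_image.mp hw
            rw [mem_filter] at hz ⊢
            exact ⟨mem_univ _, hsFq z hz.2⟩
          · rw [Finset.card_image_of_injective _ (fun a b h => pow2_inj h)]
        intro wt hwt
        have : wt ∈ (univ.filter fun u : K => u^(2^m) = u).image (fun z : K => z^(2^n)) := by
          rw [himg, mem_filter]; exact ⟨mem_univ _, hwt⟩
        obtain ⟨z, hz, hzw⟩ := mem_image.mp this
        rw [mem_filter] at hz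
        exact ⟨z, hz.2, hzw⟩
      -- collision construction for a given lam
      have hcol : ∀ lam : K, lam^(2^m) = lam → lam ≠ 0 → lam ≠ 1 → 1 + lam^(2^n)*lam ≠ 0 →
          ∃ z : K, z^(2^m) = z ∧ z ≠ 0 ∧
            (lam*z)^(2^n)*(lam*z) + A*(lam*z) = z^(2^n)*z + A*z := by
        intro lam hq hl0 hl1 hls
        obtain ⟨z, hzFq, hzs⟩ := hsurj (A*(1+lam)*((1+lam^(2^n)*lam)⁻¹))
          (hmulFq _ _ (hmulFq _ _ hAq (haddFq _ _ honeFq hq))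
            (hinvFq _ (haddFq _ _ honeFq (hmulFq _ _ (hsFq lam hq) hq))))
        have hl1' : 1 + lam ≠ 0 := by
          intro h; apply hl1
          linear_combination -h + h2 + lam*h2 - h2  -- lam = 1 from 1+lam=0
        have hz0 : z ≠ 0 := by
          rintro rfl
          rw [zero_pow (by positivity)] at hzs
          have := mul_ne_zero (mul_ne_zero hA0 hl1') (inv_ne_zero hls)
          exact this hzs.symm
        refine ⟨z, hzFq, hz0, ?_⟩
        have hzs' : z^(2^n) * (1 + lam^(2^n)*lam) = A*(1+lam) := by
          rw [hzs]
          field_simp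
          exact div_self (by rwa [mul_comm] at hls)
        rw [mul_pow]
        linear_combination (-z)*hzs' + (z*z^(2^n)*lam^(2^n)*lam - A*z)*h2
      obtain ⟨z₁, hz₁Fq, hz₁0, hcol₁⟩ := hcol l₁ hl₁Fq hl₁0 hl₁1 hl₁s
      obtain ⟨z₂, hz₂Fq, hz₂0, hcol₂⟩ := hcol l₂ hl₂Fq hl₂0 hl₂1 hl₂s
      set fcol : K → K := fun z => z^(2^n)*z + A*z with hfcol
      have hne₁ : l₁*z₁ ≠ z₁ := by
        intro h
        exact hl₁1 (mul_right_cancel₀ hz₁0 (h.trans (one_mul z₁).symm))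
      have hne₂ : l₂*z₂ ≠ z₂ := by
        intro h
        exact hl₂1 (mul_right_cancel₀ hz₂0 (h.trans (one_mul z₂).symm))
      have hlz₁Fq : (l₁*z₁)^(2^m) = l₁*z₁ := hmulFq _ _ hl₁Fq hz₁Fq
      have hlz₂Fq : (l₂*z₂)^(2^m) = l₂*z₂ := hmulFq _ _ hl₂Fq hz₂Fq
      have hpairne : ({l₁*z₁, z₁} : Finset K) ≠ {l₂*z₂, z₂} := by
        intro h
        have h1 : l₂*z₂ ∈ ({l₁*z₁, z₁} : Finset K) := by rw [h]; exact Finset.mem_insert_self _ _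
        have h2' : z₂ ∈ ({l₁*z₁, z₁} : Finset K) := by
          rw [h]; exact Finset.mem_insert_of_mem (Finset.mem_singleton_self _)
        rw [Finset.mem_insert, Finset.mem_singleton] at h1 h2'
        rcases h1 with h1 | h1 <;> rcases h2' with h2'' | h2''
        · -- l₂z₂ = l₁z₁ and z₂ = l₁z₁ : then l₂z₂ = z₂ contradiction
          exact hne₂ (h1.trans h2''.symm)
        · -- l₂z₂ = l₁z₁ and z₂ = z₁ : l₂ = l₁
          apply hl₂l₁
          apply mul_right_cancel₀ hz₂0
          rw [h1, h2'']
        · -- l₂z₂ = z₁ and z₂ = l₁z₁ : z₂ = l₁l₂z₂ ⟹ l₁l₂ = 1 ⟹ l₂ = l₁⁻¹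
          apply hl₂l₁inv
          have : l₁ * l₂ * z₂ = 1 * z₂ := by
            rw [one_mul, mul_assoc, h1, h2'']
          have hl12 : l₁ * l₂ = 1 := mul_right_cancel₀ hz₂0 this
          field_simp
          linear_combination hl12
        · -- l₂z₂ = z₁ and z₂ = z₁ : l₂z₂ = z₂
          exact hne₂ (h1.trans h2''.symm)
      have himgbd := image_card_bound (univ.filter fun u : K => u^(2^m) = u) fcol
        (by rw [mem_filter]; exact ⟨mem_univ _, hlz₁Fq⟩)
        (by rw [mem_filter]; exact ⟨mem_univ _, hz₁Fq⟩)
        (by rw [mem_filter]; exact ⟨mem_univ _, hlz₂Fq⟩)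
        (by rw [mem_filter]; exact ⟨mem_univ _, hz₂Fq⟩)
        hcol₁ hne₁ hcol₂ hne₂ hpairne
      rw [hFqcard] at himgbd
      obtain ⟨B, hBFq', hBbad⟩ := hpick
        (insert (v*v + v + (δ*δ + δ)) (((univ.filter fun u : K => u^(2^m) = u)).image fcol))
        (by
          have := Finset.card_insert_le (v*v + v + (δ*δ + δ))
            (((univ.filter fun u : K => u^(2^m) = u)).image fcol)
          omega)
      refine ⟨B, hBFq', ?_, ?_⟩
      · intro w hw hroot
        apply hBbad
        apply Finset.mem_insert_of_mem
        apply mem_image.mpr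
        exact ⟨w, by rw [mem_filter]; exact ⟨mem_univ _, hw⟩, hroot⟩
      · intro h
        apply hBbad
        rw [h]
        exact Finset.mem_insert_self _ _

  have hB0Fq : (v*v + v + (δ*δ + δ))^(2^m) = v*v + v + (δ*δ + δ) :=
    haddFq _ _ (haddFq _ _ (hmulFq _ _ hvFq hvFq) hvFq) hνq
  have hγden : B + (v*v + v + (δ*δ + δ)) ≠ 0 := by
    intro h
    apply hBB0
    linear_combination h - (v*v+v+(δ*δ+δ))*h2
  set γ : K := (B + (v*v + v + (δ*δ + δ)))⁻¹ with hγ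
  have hγ0 : γ ≠ 0 := inv_ne_zero hγden
  have hγFq : γ^(2^m) = γ := hinvFq _ (haddFq _ _ hBFq hB0Fq)
  have hγinv : γ * (B + (v*v + v + (δ*δ + δ))) = 1 := inv_mul_cancel₀ hγden
  have hγB : γ*B = γ*(v*v + v + (δ*δ + δ)) + 1 := by
    linear_combination hγinv - γ*(v*v+v+(δ*δ+δ))*h2
  set c : K := γ*v + 1 + γ*δ with hc
  have hcq : c^(2^m) = c + γ := by
    rw [hc, add_pow_char_pow, add_pow_char_pow, mul_pow, mul_pow, hγFq, hvFq, hδq, one_pow]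
    ring
  refine ⟨c, ?_⟩
  intro t ht
  rw [pow_succ] at ht
  intro hP
  have ht0 : t ≠ 0 := by rintro rfl; rw [mul_zero] at ht; exact zero_ne_one ht
  by_cases ht1 : t = 1
  · subst ht1
    rw [hcq] at hP
    simp only [one_pow, mul_one] at hP
    exact hγ0 (by linear_combination hP - (c+1)*h2)
  · have ht1' : t + 1 ≠ 0 := by
      intro h; exact ht1 (by linear_combination h - h2)
    have htq1 : t^(2^m) + 1 ≠ 0 := by
      intro h
      have hq1 : t^(2^m) = 1 := by linear_combination h - h2
      rw [hq1, one_mul] at ht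
      exact ht1 ht
    obtain ⟨y, hy⟩ : ∃ y : K, y = (δ + t*(δ+1)) * (t+1)⁻¹ := ⟨_, rfl⟩
    have hy1 : y*(t+1) = δ + t*(δ+1) := by
      rw [hy]; exact inv_mul_cancel_right₀ ht1' _
    have hkey : (δ + t*(δ+1))*(t^(2^m)+1) = (δ+1+t^(2^m)*δ)*(t+1) := by
      linear_combination ht
    have hYaq : (δ + t*(δ+1))^(2^m) = δ+1+t^(2^m)*δ := by
      rw [add_pow_char_pow, mul_pow, add_pow_char_pow, hδq, one_pow]
      linear_combination (t^(2^m))*h2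
    have h7 : y*(t^(2^m)+1) = δ+1+t^(2^m)*δ := by
      apply mul_right_cancel₀ ht1'
      calc y*(t^(2^m)+1)*(t+1) = (y*(t+1))*(t^(2^m)+1) := by ring
        _ = (δ + t*(δ+1))*(t^(2^m)+1) := by rw [hy1]
        _ = (δ+1+t^(2^m)*δ)*(t+1) := hkey
    have hexp : (t+1)^(2^m) = t^(2^m)+1 := by rw [add_pow_char_pow, one_pow]
    have hyq : y^(2^m) = y := by
      apply mul_right_cancel₀ htq1
      have hyqq : y^(2^m)*(t^(2^m)+1) = δ+1+t^(2^m)*δ := by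
        rw [← hexp, ← mul_pow, hy1, hYaq]
      rw [hyqq, h7]
    have hR1' : y + δ = t*(y+δ+1) := by
      linear_combination hy1 + (t*δ+t-y)*h2 + (y - y*t + δ - δ*t - t)*h2
    have hR2' : y^(2^n) + δ^(2^n) = t^(2^n)*(y^(2^n)+δ^(2^n)+1) := by
      have e1 : (y+δ)^(2^n) = y^(2^n) + δ^(2^n) := by rw [add_pow_char_pow]
      have e2 : (y+δ+1)^(2^n) = y^(2^n) + δ^(2^n) + 1 := by
        rw [add_pow_char_pow, add_pow_char_pow, one_pow]
      calc y^(2^n) + δ^(2^n) = (y+δ)^(2^n) := e1.symm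
        _ = (t*(y+δ+1))^(2^n) := congrArg (·^(2^n)) hR1'
        _ = t^(2^n)*(y+δ+1)^(2^n) := mul_pow _ _ _
        _ = t^(2^n)*(y^(2^n)+δ^(2^n)+1) := by rw [e2]
    have hk4 := key4 h2 y (y^(2^n)) δ (δ^(2^n)) v (v^(2^n)) γ
    have hLHS : (y^(2^n)+δ^(2^n))*(y+δ) + (γ*v+1+γ*δ)*(y^(2^n)+δ^(2^n))*(y+δ+1)
        + (γ*v+1+γ*δ+γ)*(y+δ)*(y^(2^n)+δ^(2^n)+1) + (y^(2^n)+δ^(2^n)+1)*(y+δ+1)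
        = (t^(2^n+1) + c*t^(2^n) + c^(2^m)*t + 1) * ((y^(2^n)+δ^(2^n)+1)*(y+δ+1)) := by
      rw [hcq, hc, pow_succ]
      linear_combination
        (1 + δ*δ^(2^n)*γ + δ*γ + δ*γ*y^(2^n) + 2*δ^(2^n) + δ^(2^n)*γ + δ^(2^n)*γ*v + γ + γ*v
          + γ*v*y^(2^n) + γ*y^(2^n) + 2*y^(2^n)) * hR1'
        + (1 + δ + δ*γ + δ*γ*v + δ*γ*y + δ*t + δ^2*γ + γ*v + γ*v*y + t + t*y + y) * hR2'
    rw [hLHS, hP, zero_mul] at hk4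
    have hwFq : (y+v)^(2^m) = y+v := haddFq _ _ hyq hvFq
    have hwexp : (y+v)^(2^n) = y^(2^n)+v^(2^n) := by rw [add_pow_char_pow]
    have hfin : (y+v)^(2^n)*(y+v) + A*(y+v) = B := by
      have hX : γ*((y+v)^(2^n)*(y+v) + A*(y+v) + B) = 0 := by
        rw [hwexp, hA]
        linear_combination (-1)*hk4 + hγB
      have hX2 := (mul_eq_zero.mp hX).resolve_left hγ0
      linear_combination hX2 - B*h2
    exact hBroot (y+v) hwFq hfin

end GoodC
section MainPart
variable {K : Type} [Field K] [Fintype K]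

private def PhiK (c d : K) (q s : ℕ) (z a : K) : K :=
  z*a^s + a*z^s + z^q*(a^q)^s + a^q*(z^q)^s + z*a^q + a*z^q
  + c*(z*(a^q)^s + a*(z^q)^s) + c^q*(z^s*a^q + a^s*z^q) + d*(z^s*(a^q)^s + a^s*(z^q)^s)

private lemma ker_step (m n : ℕ) (hm : 1 ≤ m) (hn : 1 ≤ n) (hgcd : Nat.gcd m n = 1)
    [CharP K 2] (hcard : Fintype.card K = 2 ^ (2*m)) (c d : K)
    (hd : d^(2^m) ≠ d)
    (hc : m = 1 ∨ ∀ t : K, t^(2^m+1) = 1 → t^(2^n+1) + c*t^(2^n) + c^(2^m)*t + 1 ≠ 0)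
    (a z : K) (ha : a ≠ 0) (hΦ : PhiK c d (2^m) (2^n) z a = 0) : z = 0 ∨ z = a := by
  have h2 : (2:K) = 0 := CharTwo.two_eq_zero
  have hqq : ∀ u : K, (u^(2^m))^(2^m) = u := pow_qq hcard
  have hqsq : ∀ u : K, ((u^(2^m))^(2^n))^(2^m) = u^(2^n) := by
    intro u
    calc ((u^(2^m))^(2^n))^(2^m) = ((u^(2^m))^(2^m))^(2^n) := pow_right_comm _ _ _
      _ = u^(2^n) := by rw [hqq]
  have hcom : ∀ u : K, (u^(2^n))^(2^m) = (u^(2^m))^(2^n) := fun u => pow_right_comm u _ _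
  have hconj : (PhiK c d (2^m) (2^n) z a)^(2^m)
      = z^(2^m)*(a^(2^m))^(2^n) + a^(2^m)*(z^(2^m))^(2^n) + z*a^(2^n) + a*z^(2^n) + z^(2^m)*a + a^(2^m)*z
        + c^(2^m)*(z^(2^m)*a^(2^n) + a^(2^m)*z^(2^n)) + c*((z^(2^m))^(2^n)*a + (a^(2^m))^(2^n)*z)
        + d^(2^m)*((z^(2^m))^(2^n)*a^(2^n) + (a^(2^m))^(2^n)*z^(2^n)) := by
    simp only [PhiK, add_pow_char_pow, mul_pow, hcom, hqq, hqsq]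
    try ring
  have hkey2 : (d + d^(2^m)) * (z^(2^n)*(a^(2^m))^(2^n) + a^(2^n)*(z^(2^m))^(2^n)) = 0 := by
    have hk := key2 h2 c (c^(2^m)) d (d^(2^m)) z (z^(2^m)) (z^(2^n)) ((z^(2^m))^(2^n))
      a (a^(2^m)) (a^(2^n)) ((a^(2^m))^(2^n))
    have hΦq : (PhiK c d (2^m) (2^n) z a)^(2^m) = 0 := by rw [hΦ]; exact zero_pow (by positivity)
    rw [hconj] at hΦq
    have hΦ' : PhiK c d (2^m) (2^n) z a = 0 := hΦ
    simp only [PhiK] at hΦ'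
    linear_combination -hk + hΦ' + hΦq
  have hdd : d + d^(2^m) ≠ 0 := by
    intro h
    exact hd (by linear_combination h - d*h2)
  have hS : z^(2^n)*(a^(2^m))^(2^n) + a^(2^n)*(z^(2^m))^(2^n) = 0 :=
    (mul_eq_zero.mp hkey2).resolve_left hdd
  have hzs : (z*a^(2^m) + a*z^(2^m))^(2^n) = 0 := by
    rw [add_pow_char_pow, mul_pow, mul_pow]
    linear_combination hS
  have hu : z*a^(2^m) + a*z^(2^m) = 0 := pow_eq_zero_iff (by positivity) |>.mp hzs
  have hu' : z*a^(2^m) = a*z^(2^m) := by linear_combination hu - (a*z^(2^m))*h2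
  rcases hc with hm1 | hgood
  · subst hm1
    have h22 : z*(a*a) = a*(z*z) := by linear_combination hu'
    have hzz : a*z*(z+a) = 0 := by linear_combination (-1)*h22 + (z*a*a)*h2
    rcases mul_eq_zero.mp hzz with h | h
    · rcases mul_eq_zero.mp h with h' | h'
      · exact absurd h' ha
      · exact Or.inl h'
    · exact Or.inr (by linear_combination h - a*h2)
  · obtain ⟨lam, hlam⟩ : ∃ lam : K, z = a*lam := ⟨z*a⁻¹, by field_simp⟩
    subst hlam
    have haq : a^(2^m) ≠ 0 := pow_ne_zero _ ha
    have hlamq : lam^(2^m) = lam := by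
      have h := hu'
      rw [mul_pow] at h
      have h' : lam * (a * a^(2^m)) = lam^(2^m) * (a * a^(2^m)) := by linear_combination h
      exact (mul_right_cancel₀ (mul_ne_zero ha haq) h').symm
    have hPhi2 : PhiK c d (2^m) (2^n) (a*lam) a
        = (a*a^(2^n) + c*a*(a^(2^m))^(2^n) + c^(2^m)*a^(2^m)*a^(2^n)
            + a^(2^m)*(a^(2^m))^(2^n)) * (lam^(2^n) + lam) := by
      simp only [PhiK, mul_pow, hlamq]
      linear_combination key3 h2 c (c^(2^m)) d a (a^(2^m)) (a^(2^n)) ((a^(2^m))^(2^n)) lam (lam^(2^n))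
    obtain ⟨tp, htp⟩ : ∃ tp : K, tp = a^(2^m)*a⁻¹ := ⟨_, rfl⟩
    have hRa : tp * a = a^(2^m) := by rw [htp]; field_simp
    have hRb : tp^(2^n) * a^(2^n) = (a^(2^m))^(2^n) := by
      rw [← mul_pow, hRa]
    have ht1 : tp^(2^m+1) = 1 := by
      rw [htp, mul_pow, inv_pow, pow_succ]
      have e1 : (a^(2^m))^(2^m) * a^(2^m) = a * a^(2^m) := by rw [hqq]
      rw [pow_succ, hqq]
      rw [mul_comm a (a^(2^m)), mul_inv_cancel₀ (mul_ne_zero haq ha)]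
    have hPc := hgood tp ht1
    have hT : (a*a^(2^n) + c*a*(a^(2^m))^(2^n) + c^(2^m)*a^(2^m)*a^(2^n)
        + a^(2^m)*(a^(2^m))^(2^n)) ≠ 0 := by
      intro h
      apply hPc
      have hfact : a*a^(2^n) + c*a*(a^(2^m))^(2^n) + c^(2^m)*a^(2^m)*a^(2^n)
          + a^(2^m)*(a^(2^m))^(2^n)
          = (tp^(2^n+1) + c*tp^(2^n) + c^(2^m)*tp + 1) * (a^(2^n)*a) := by
        rw [pow_succ]
        linear_combination (-(c*a + a^(2^m)))*hRb + (-(tp^(2^n)*a^(2^n) + c^(2^m)*a^(2^n)))*hRa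
      have h0 : (tp^(2^n+1) + c*tp^(2^n) + c^(2^m)*tp + 1) * (a^(2^n)*a) = 0 := by
        rw [← hfact]; exact h
      exact (mul_eq_zero.mp h0).resolve_right (mul_ne_zero (pow_ne_zero _ ha) ha)
    rw [hPhi2] at hΦ
    have hls : lam^(2^n) + lam = 0 := (mul_eq_zero.mp hΦ).resolve_left hT
    have hlss : lam^(2^n) = lam := by linear_combination hls - lam*h2
    have hfix := gcd_fix lam m n hlamq hlss
    rw [hgcd, pow_one] at hfix
    have hfac : lam*(lam+1) = 0 := by linear_combination hfix + lam*h2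
    rcases mul_eq_zero.mp hfac with h | h
    · exact Or.inl (by rw [h, mul_zero])
    · have : lam = 1 := by linear_combination h - h2
      exact Or.inr (by rw [this, mul_one])

end MainPart

/-- Corollary: if `gcd(m,n) = 1`, there exist `c ∈ F_{r^2}` and `d ∈ F_{r^2} \ F_r` such
that `F` is APN on `F_{r^2}`. -/
theorem stmt19 (m n : ℕ) (hm : 1 ≤ m) (hn : 1 ≤ n) (hgcd : Nat.gcd m n = 1)
    (K : Type) [Field K] [Fintype K] (hcard : Fintype.card K = 2 ^ (2 * m)) :
    ∃ c d : K, d ^ (2 ^ m) ≠ d ∧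
      (let r := 2 ^ m; let s := 2 ^ n
       let F : K → K := fun x =>
         x * (x ^ s + x ^ r + c * x ^ (r * s)) + x ^ s * (c ^ r * x ^ r + d * x ^ (r * s))
           + x ^ ((s + 1) * r)
       ∀ a : K, a ≠ 0 → ∀ b : K, {x : K | F (x + a) + F x = b}.ncard ≤ 2) := by
  haveI hchar : CharP K 2 := char2_of_card hcard
  have h2 : (2:K) = 0 := CharTwo.two_eq_zero
  obtain ⟨-, δ0, hδ0⟩ := Fq_struct m hm hcard
  have hd : δ0^(2^m) ≠ δ0 := by
    rw [hδ0]
    intro h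
    exact one_ne_zero (α := K) (by linear_combination h)
  obtain ⟨c, hc⟩ : ∃ c : K, m = 1 ∨
      ∀ t : K, t^(2^m+1) = 1 → t^(2^n+1) + c*t^(2^n) + c^(2^m)*t + 1 ≠ 0 := by
    rcases eq_or_lt_of_le hm with h1 | h1
    · exact ⟨0, Or.inl h1.symm⟩
    · obtain ⟨c, hcg⟩ := exists_good_c m n h1 hn hgcd hcard
      exact ⟨c, Or.inr hcg⟩
  refine ⟨c, δ0, hd, ?_⟩
  intro r s F a ha b
  have hFx : ∀ x : K, F x = x * (x^(2^n) + x^(2^m) + c*(x^(2^m))^(2^n))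
      + x^(2^n)*(c^(2^m)*x^(2^m) + δ0*(x^(2^m))^(2^n)) + (x^(2^m))^(2^n)*x^(2^m) := by
    intro x
    have h1 : F x = x * (x ^ 2^n + x ^ 2^m + c * x ^ (2^m * 2^n))
        + x ^ 2^n * (c ^ 2^m * x ^ 2^m + δ0 * x ^ (2^m * 2^n)) + x ^ ((2^n + 1) * 2^m) := rfl
    rw [h1, pow_mul, show (2^n + 1) * 2^m = 2^m * 2^n + 2^m by ring, pow_add, pow_mul]
  rcases Set.eq_empty_or_nonempty {x : K | F (x + a) + F x = b} with hS | ⟨x₀, hx₀⟩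
  · rw [hS]
    simp
  · have hx₀' : F (x₀+a) + F x₀ = b := hx₀
    have hsub : {x : K | F (x + a) + F x = b} ⊆ {x₀, x₀ + a} := by
      intro x hx
      have hx' : F (x+a) + F x = b := hx
      have hΦ : PhiK c δ0 (2^m) (2^n) (x+x₀) a = 0 := by
        have hk1 := key1 h2 c (c^(2^m)) δ0 x (x^(2^m)) (x^(2^n)) ((x^(2^m))^(2^n))
          x₀ (x₀^(2^m)) (x₀^(2^n)) ((x₀^(2^m))^(2^n)) a (a^(2^m)) (a^(2^n)) ((a^(2^m))^(2^n))
        have hL : F (x+a) + F x + (F (x₀+a) + F x₀) = 0 := by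
          rw [hx', hx₀']; linear_combination b*h2
        have hFs : ∀ u w : K, F (u+w)
            = (u+w) * ((u^(2^n)+w^(2^n)) + (u^(2^m)+w^(2^m)) + c*((u^(2^m))^(2^n)+(w^(2^m))^(2^n)))
            + ((u^(2^n)+w^(2^n)))*(c^(2^m)*(u^(2^m)+w^(2^m)) + δ0*((u^(2^m))^(2^n)+(w^(2^m))^(2^n)))
            + ((u^(2^m))^(2^n)+(w^(2^m))^(2^n))*(u^(2^m)+w^(2^m)) := by
          intro u w
          rw [hFx (u+w)]
          simp only [add_pow_char_pow]
        have e1 := hFs x a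
        have e2 := hFx x
        have e3 := hFs x₀ a
        have e4 := hFx x₀
        have e5 : PhiK c δ0 (2^m) (2^n) (x+x₀) a
            = (x+x₀)*(a^(2^n)) + a*((x^(2^n))+(x₀^(2^n)))
              + ((x^(2^m))+(x₀^(2^m)))*((a^(2^m))^(2^n)) + (a^(2^m))*(((x^(2^m))^(2^n))+((x₀^(2^m))^(2^n)))
              + (x+x₀)*(a^(2^m)) + a*((x^(2^m))+(x₀^(2^m)))
              + c*((x+x₀)*((a^(2^m))^(2^n)) + a*(((x^(2^m))^(2^n))+((x₀^(2^m))^(2^n))))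
              + c^(2^m)*(((x^(2^n))+(x₀^(2^n)))*(a^(2^m)) + (a^(2^n))*((x^(2^m))+(x₀^(2^m))))
              + δ0*(((x^(2^n))+(x₀^(2^n)))*((a^(2^m))^(2^n)) + (a^(2^n))*(((x^(2^m))^(2^n))+((x₀^(2^m))^(2^n)))) := by
          simp only [PhiK, add_pow_char_pow]
          try ring
        linear_combination e5 - hk1 - e1 - e2 - e3 - e4 + hL
      rcases ker_step m n hm hn hgcd hcard c δ0 hd hc a (x+x₀) ha hΦ with h | h
      · simp only [Set.mem_insert_iff, Set.mem_singleton_iff]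
        exact Or.inl (by linear_combination h - x₀*h2)
      · simp only [Set.mem_insert_iff, Set.mem_singleton_iff]
        exact Or.inr (by linear_combination h - x₀*h2)
    calc {x : K | F (x + a) + F x = b}.ncard
        ≤ ({x₀, x₀ + a} : Set K).ncard :=
          Set.ncard_le_ncard hsub ((Set.finite_singleton _).insert _)
      _ ≤ 2 := le_trans (Set.ncard_insert_le _ _) (by rw [Set.ncard_singleton])
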